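/- Any submodular deterministic two-item menu (a,b,c) (i.e., with max(a,b) ≤ c ≤ a+b) is revenue monotone: if (v1', v2') ≤ (v1, v2) coordinatewise, then the payment made by a buyer with values (v1,v2) is at least the payment made by a buyer with values (v1',v2'). -/
import Mathlib


open MeasureTheory

/-- Payment made by a utility-maximizing additive buyer with values `(v1, v2)` facing the
deterministic menu charging `a` for item 1, `b` for item 2, `c` for the pair;
ties are broken in favor of the higher payment. -/
noncomputable def pay (a b c v1 v2 : ℝ) : ℝ :=
  let u1 := v1 - a
  let u2 := v2 - b
  let u12 := v1 + v2 - c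
  let m := max (max 0 u1) (max u2 u12)
  max (if u1 = m then a else 0) (max (if u2 = m then b else 0) (if u12 = m then c else 0))

/-- Expected revenue of the menu `(a, b, c)` when values are drawn from `μ`. -/
noncomputable def rev (μ : Measure (ℝ × ℝ)) (a b c : ℝ) : ℝ :=
  ∫ v, pay a b c v.1 v.2 ∂μ

lemma pay_nonneg (a b c v1 v2 : ℝ) (ha : 0 ≤ a) (hb : 0 ≤ b) (hc : 0 ≤ c) :
    0 ≤ pay a b c v1 v2 := by
  simp only [pay]
  split_ifs <;> simp [le_max_iff] <;> tauto

lemma pay_ge_a (a b c v1 v2 : ℝ) (hac : a ≤ c) (hsub : c ≤ a + b) (h : a ≤ v1) :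
    a ≤ pay a b c v1 v2 := by
  simp only [pay]
  set m := max (max 0 (v1 - a)) (max (v2 - b) (v1 + v2 - c)) with hm
  have hm0 : 0 ≤ m := le_trans (le_max_left _ _) (le_max_left _ _)
  have hm1 : v1 - a ≤ m := le_trans (le_max_right _ _) (le_max_left _ _)
  have hm2 : v2 - b ≤ m := le_trans (le_max_left _ _) (le_max_right _ _)
  have hm3 : v1 + v2 - c ≤ m := le_trans (le_max_right _ _) (le_max_right _ _)
  by_cases h1 : v1 - a = m
  · rw [if_pos h1]; exact le_max_left _ _
  · by_cases h12 : v1 + v2 - c = m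
    · rw [if_pos h12]
      exact le_trans hac (le_max_of_le_right (le_max_right _ _))
    · exfalso
      have hcases : m = 0 ∨ m = v1 - a ∨ m = v2 - b ∨ m = v1 + v2 - c := by
        rcases max_choice (max 0 (v1 - a)) (max (v2 - b) (v1 + v2 - c)) with h' | h' <;>
          rw [hm, h']
        · rcases max_choice 0 (v1 - a) with h'' | h'' <;> rw [h''] <;> tauto
        · rcases max_choice (v2 - b) (v1 + v2 - c) with h'' | h'' <;> rw [h''] <;> tauto
      have h1' : v1 - a < m := lt_of_le_of_ne hm1 h1
      have h12' : v1 + v2 - c < m := lt_of_le_of_ne hm3 h12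
      rcases hcases with h' | h' | h' | h' <;> linarith

lemma pay_ge_b (a b c v1 v2 : ℝ) (hbc : b ≤ c) (hsub : c ≤ a + b) (h : b ≤ v2) :
    b ≤ pay a b c v1 v2 := by
  simp only [pay]
  set m := max (max 0 (v1 - a)) (max (v2 - b) (v1 + v2 - c)) with hm
  have hm0 : 0 ≤ m := le_trans (le_max_left _ _) (le_max_left _ _)
  have hm1 : v1 - a ≤ m := le_trans (le_max_right _ _) (le_max_left _ _)
  have hm2 : v2 - b ≤ m := le_trans (le_max_left _ _) (le_max_right _ _)
  have hm3 : v1 + v2 - c ≤ m := le_trans (le_max_right _ _) (le_max_right _ _)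
  by_cases h2 : v2 - b = m
  · rw [if_pos h2]; exact le_max_of_le_right (le_max_left _ _)
  · by_cases h12 : v1 + v2 - c = m
    · rw [if_pos h12]
      exact le_trans hbc (le_max_of_le_right (le_max_right _ _))
    · exfalso
      have hcases : m = 0 ∨ m = v1 - a ∨ m = v2 - b ∨ m = v1 + v2 - c := by
        rcases max_choice (max 0 (v1 - a)) (max (v2 - b) (v1 + v2 - c)) with h' | h' <;>
          rw [hm, h']
        · rcases max_choice 0 (v1 - a) with h'' | h'' <;> rw [h''] <;> tauto
        · rcases max_choice (v2 - b) (v1 + v2 - c) with h'' | h'' <;> rw [h''] <;> tauto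
      have h2' : v2 - b < m := lt_of_le_of_ne hm2 h2
      have h12' : v1 + v2 - c < m := lt_of_le_of_ne hm3 h12
      rcases hcases with h' | h' | h' | h' <;> linarith

lemma pay_ge_c (a b c v1 v2 : ℝ) (hA : c - b ≤ v1) (hB : c - a ≤ v2) (hC : c ≤ v1 + v2) :
    c ≤ pay a b c v1 v2 := by
  simp only [pay]
  have h12 : v1 + v2 - c = max (max 0 (v1 - a)) (max (v2 - b) (v1 + v2 - c)) :=
    le_antisymm (le_trans (le_max_right _ _) (le_max_right _ _))
      (max_le (max_le (by linarith) (by linarith)) (max_le (by linarith) le_rfl))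
  rw [if_pos h12]
  exact le_max_of_le_right (le_max_right _ _)

lemma pay_def (a b c v1 v2 : ℝ) : pay a b c v1 v2 =
    max (if v1 - a = max (max 0 (v1 - a)) (max (v2 - b) (v1 + v2 - c)) then a else 0)
      (max (if v2 - b = max (max 0 (v1 - a)) (max (v2 - b) (v1 + v2 - c)) then b else 0)
        (if v1 + v2 - c = max (max 0 (v1 - a)) (max (v2 - b) (v1 + v2 - c)) then c else 0)) := rfl

theorem stmt3 (a b c : ℝ) (ha : 0 ≤ a) (hb : 0 ≤ b) (hmax : max a b ≤ c) (hsub : c ≤ a + b)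
    (v1 v2 v1' v2' : ℝ) (h1' : 0 ≤ v1') (h2' : 0 ≤ v2') (h1 : v1' ≤ v1) (h2 : v2' ≤ v2) :
    pay a b c v1' v2' ≤ pay a b c v1 v2 := by
  have hac : a ≤ c := (le_max_left a b).trans hmax
  have hbc : b ≤ c := (le_max_right a b).trans hmax
  have hc : 0 ≤ c := ha.trans hac
  rw [pay_def a b c v1' v2']
  set m' := max (max 0 (v1' - a)) (max (v2' - b) (v1' + v2' - c)) with hm'
  have hm0 : 0 ≤ m' := le_trans (le_max_left _ _) (le_max_left _ _)
  have hm1 : v1' - a ≤ m' := le_trans (le_max_right _ _) (le_max_left _ _)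
  have hm2 : v2' - b ≤ m' := le_trans (le_max_left _ _) (le_max_right _ _)
  have hm3 : v1' + v2' - c ≤ m' := le_trans (le_max_right _ _) (le_max_right _ _)
  refine max_le ?_ (max_le ?_ ?_)
  · split_ifs with h
    · exact pay_ge_a a b c v1 v2 hac hsub (by linarith)
    · exact pay_nonneg a b c v1 v2 ha hb hc
  · split_ifs with h
    · exact pay_ge_b a b c v1 v2 hbc hsub (by linarith)
    · exact pay_nonneg a b c v1 v2 ha hb hc
  · split_ifs with h
    · exact pay_ge_c a b c v1 v2 (by linarith) (by linarith) (by linarith)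
    · exact pay_nonneg a b c v1 v2 ha hb hc
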